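/- Let λ be a σ-finite Borel measure on ℝ, let δ > 0, and let a : ℝ → [0,∞) be measurable with M(s; a) < ∞ for all s ∈ [-δ, δ]. Let f : ℝ → ℝ be measurable with ∫ f(x)² a(x) dλ(x) < ∞, and suppose that for every k ∈ ℕ₀ one has ∫ x^k f(x) a(x) dλ(x) = 0. Then for every t ∈ [-δ/2, δ/2], the function x ↦ e^{tx} f(x) a(x) is λ-integrable and ∫ e^{tx} f(x) a(x) dλ(x) = 0. -/

import Mathlib

open MeasureTheory

private lemma real_exp_eq_tsum (u : ℝ) : Real.exp u = ∑' (n : ℕ), u ^ n / (n.factorial : ℝ) := by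
  rw [Real.exp_eq_exp_ℝ, NormedSpace.exp_eq_tsum_div]

theorem laplace_vanishes_of_moments_vanish
    (lam : Measure ℝ) [SigmaFinite lam] (δ : ℝ) (hδ : 0 < δ)
    (a : ℝ → ℝ) (ha : Measurable a) (ha0 : ∀ x, 0 ≤ a x)
    (hM : ∀ s ∈ Set.Icc (-δ) δ,
      ∫⁻ x, ENNReal.ofReal (Real.exp (s * x) * a x) ∂lam < ⊤)
    (f : ℝ → ℝ) (hf : Measurable f)
    (hf2 : ∫⁻ x, ENNReal.ofReal (f x ^ 2 * a x) ∂lam < ⊤)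
    (hmom : ∀ k : ℕ, ∫ x, x ^ k * f x * a x ∂lam = 0) :
    ∀ t ∈ Set.Icc (-(δ / 2)) (δ / 2),
      Integrable (fun x => Real.exp (t * x) * f x * a x) lam ∧
      ∫ x, Real.exp (t * x) * f x * a x ∂lam = 0 := by
  intro t ht
  obtain ⟨ht1, ht2⟩ := ht
  have h2t : (2 * t) ∈ Set.Icc (-δ) δ := ⟨by linarith, by linarith⟩
  have h2t' : (-(2 * t)) ∈ Set.Icc (-δ) δ := ⟨by linarith, by linarith⟩
  set F : ℝ → ℝ := fun x => Real.exp (|t| * |x|) * (|f x| * a x) with hF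
  have hFnn : ∀ x, 0 ≤ F x := fun x =>
    mul_nonneg (Real.exp_nonneg _) (mul_nonneg (abs_nonneg _) (ha0 x))
  -- key pointwise bound
  have hFbound : ∀ x, F x ≤
      (Real.exp (2 * t * x) * a x + Real.exp (-(2 * t) * x) * a x + f x ^ 2 * a x) := by
    intro x
    have h1 : Real.exp (|t| * |x|) * |f x| ≤
        (Real.exp (|t| * |x|) ^ 2 + |f x| ^ 2) / 2 := by
      nlinarith [sq_nonneg (Real.exp (|t| * |x|) - |f x|)]
    have h2 : Real.exp (|t| * |x|) ^ 2 = Real.exp (2 * (|t| * |x|)) := by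
      rw [sq, ← Real.exp_add]; ring_nf
    have h3 : Real.exp (2 * (|t| * |x|)) ≤
        Real.exp (2 * t * x) + Real.exp (-(2 * t) * x) := by
      have habs : 2 * (|t| * |x|) = |2 * t * x| := by
        rw [abs_mul, abs_mul]; simp [abs_of_nonneg]; ring
      rcases le_or_gt 0 (2 * t * x) with h | h
      · rw [habs, abs_of_nonneg h]
        nlinarith [Real.exp_pos (-(2 * t) * x)]
      · rw [habs, abs_of_neg h]
        have : -(2 * t * x) = -(2 * t) * x := by ring
        rw [this]
        nlinarith [Real.exp_pos (2 * t * x)]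
    have h4 : Real.exp (|t| * |x|) * |f x| ≤
        Real.exp (2 * t * x) + Real.exp (-(2 * t) * x) + f x ^ 2 := by
      have := sq_abs (f x)
      nlinarith
    calc F x = (Real.exp (|t| * |x|) * |f x|) * a x := by rw [hF]; ring
      _ ≤ (Real.exp (2 * t * x) + Real.exp (-(2 * t) * x) + f x ^ 2) * a x :=
          mul_le_mul_of_nonneg_right h4 (ha0 x)
      _ = _ := by ring
  -- finiteness of the integral of F
  have hFfin : ∫⁻ x, ENNReal.ofReal (F x) ∂lam < ⊤ := by
    have hle : ∀ x, ENNReal.ofReal (F x) ≤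
        ENNReal.ofReal (Real.exp (2 * t * x) * a x) +
        ENNReal.ofReal (Real.exp (-(2 * t) * x) * a x) +
        ENNReal.ofReal (f x ^ 2 * a x) := by
      intro x
      exact le_trans (ENNReal.ofReal_le_ofReal (hFbound x))
        (le_trans ENNReal.ofReal_add_le (add_le_add ENNReal.ofReal_add_le le_rfl))
    have hm1 : Measurable fun x => ENNReal.ofReal (Real.exp (2 * t * x) * a x) :=
      (((Real.measurable_exp.comp (measurable_const.mul measurable_id)).mul ha)).ennreal_ofReal
    have hm2 : Measurable fun x => ENNReal.ofReal (Real.exp (-(2 * t) * x) * a x) :=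
      (((Real.measurable_exp.comp (measurable_const.mul measurable_id)).mul ha)).ennreal_ofReal
    calc ∫⁻ x, ENNReal.ofReal (F x) ∂lam
        ≤ ∫⁻ x, (ENNReal.ofReal (Real.exp (2 * t * x) * a x) +
            ENNReal.ofReal (Real.exp (-(2 * t) * x) * a x) +
            ENNReal.ofReal (f x ^ 2 * a x)) ∂lam := lintegral_mono hle
      _ = (∫⁻ x, ENNReal.ofReal (Real.exp (2 * t * x) * a x) ∂lam) +
          (∫⁻ x, ENNReal.ofReal (Real.exp (-(2 * t) * x) * a x) ∂lam) +
          (∫⁻ x, ENNReal.ofReal (f x ^ 2 * a x) ∂lam) := by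
            rw [lintegral_add_left (show Measurable fun x => ENNReal.ofReal (Real.exp (2 * t * x) * a x) + ENNReal.ofReal (Real.exp (-(2 * t) * x) * a x) from hm1.add hm2), lintegral_add_left hm1]
      _ < ⊤ := ENNReal.add_lt_top.2 ⟨ENNReal.add_lt_top.2 ⟨hM _ h2t, hM _ h2t'⟩, hf2⟩
  -- the target function is dominated by F
  have hdom : ∀ x, ‖Real.exp (t * x) * f x * a x‖ ≤ F x := by
    intro x
    have : |Real.exp (t * x) * f x * a x| = Real.exp (t * x) * (|f x| * a x) := by
      rw [abs_mul, abs_mul, abs_of_nonneg (Real.exp_nonneg _), abs_of_nonneg (ha0 x)]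
      ring
    rw [Real.norm_eq_abs, this]
    refine mul_le_mul_of_nonneg_right (Real.exp_le_exp.2 ?_)
      (mul_nonneg (abs_nonneg _) (ha0 x))
    calc t * x ≤ |t * x| := le_abs_self _
      _ = |t| * |x| := abs_mul _ _
  have hmeas : Measurable fun x => Real.exp (t * x) * f x * a x :=
    ((Real.measurable_exp.comp (measurable_const.mul measurable_id)).mul hf).mul ha
  have hint : Integrable (fun x => Real.exp (t * x) * f x * a x) lam := by
    refine ⟨hmeas.aestronglyMeasurable, ?_⟩
    rw [hasFiniteIntegral_iff_norm]
    exact lt_of_le_of_lt (lintegral_mono fun x => ENNReal.ofReal_le_ofReal (hdom x)) hFfin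
  refine ⟨hint, ?_⟩
  -- the series
  set g : ℕ → ℝ → ℝ := fun k x => (t ^ k / (k.factorial : ℝ)) * (x ^ k * f x * a x) with hg
  have hgmeas : ∀ k, Measurable (g k) := fun k =>
    measurable_const.mul (((measurable_id.pow_const k).mul hf).mul ha)
  have habs_g : ∀ k x, |g k x| = (|t| * |x|) ^ k / (k.factorial : ℝ) * (|f x| * a x) := by
    intro k x
    rw [hg]
    simp only [abs_mul, abs_div, abs_pow, Nat.abs_cast, abs_of_nonneg (ha0 x), mul_pow]
    ring
  have hsummable : ∀ x, Summable fun k : ℕ => (|t| * |x|) ^ k / (k.factorial : ℝ) * (|f x| * a x) :=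
    fun x => (Real.summable_pow_div_factorial _).mul_right _
  have htsum_abs : ∀ x, (∑' (k : ℕ), (|t| * |x|) ^ k / (k.factorial : ℝ) * (|f x| * a x)) = F x := by
    intro x
    rw [tsum_mul_right, ← real_exp_eq_tsum]
  -- summability of lintegrals of norms
  have hnorm_eq : ∀ k x, (‖g k x‖₊ : ENNReal) =
      ENNReal.ofReal ((|t| * |x|) ^ k / (k.factorial : ℝ) * (|f x| * a x)) := by
    intro k x
    rw [← enorm_eq_nnnorm, ← ofReal_norm, Real.norm_eq_abs, habs_g]
  have hlintsum : (∑' (k : ℕ), ∫⁻ x, ‖g k x‖₊ ∂lam) ≠ ⊤ := by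
    have : (∑' (k : ℕ), ∫⁻ x, ‖g k x‖₊ ∂lam) = ∫⁻ x, ENNReal.ofReal (F x) ∂lam := by
      have hmk : ∀ k : ℕ, AEMeasurable
          (fun x => (‖g k x‖₊ : ENNReal)) lam :=
        fun k => ((hgmeas k).nnnorm.coe_nnreal_ennreal).aemeasurable
      rw [← lintegral_tsum hmk]
      refine lintegral_congr fun x => ?_
      simp_rw [hnorm_eq]
      rw [← ENNReal.ofReal_tsum_of_nonneg
        (fun k => mul_nonneg (div_nonneg (pow_nonneg (mul_nonneg (abs_nonneg _) (abs_nonneg _)) _)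
          (Nat.cast_nonneg _)) (mul_nonneg (abs_nonneg _) (ha0 x))) (hsummable x),
        htsum_abs]
    rw [this]
    exact hFfin.ne
  -- pointwise identity
  have hpt : ∀ x, (∑' (k : ℕ), g k x) = Real.exp (t * x) * f x * a x := by
    intro x
    have : ∀ k : ℕ, g k x = (t * x) ^ k / (k.factorial : ℝ) * (f x * a x) := by
      intro k; rw [hg]; simp only [mul_pow]; ring
    rw [tsum_congr this, tsum_mul_right, ← real_exp_eq_tsum]
    ring
  have hswap := integral_tsum (fun k => (hgmeas k).aestronglyMeasurable) hlintsum
  have : ∫ x, Real.exp (t * x) * f x * a x ∂lam = ∑' (k : ℕ), ∫ x, g k x ∂lam := by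
    rw [← hswap]
    exact integral_congr_ae (Filter.Eventually.of_forall fun x => (hpt x).symm)
  rw [this]
  have hzero : ∀ k : ℕ, ∫ x, g k x ∂lam = 0 := by
    intro k
    rw [hg]
    simp only
    rw [integral_const_mul, hmom k, mul_zero]
  simp [hzero]
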